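/- arXiv:1201.2846 — 3 statements merged into one kernel-verified Lean document; each statement's English description precedes it below -/
import Mathlib

section
/- Let $w \in C^2(\mathbb{R})$ be periodic with period 1, and let $\alpha, \beta$ be real numbers such that $w''(t) + \alpha w'(t) \ge \beta$ for all $t \in \mathbb{R}$. Then $|w'(t)| \le 2|\beta| e^{2|\alpha|}$ for all $t \in \mathbb{R}$. -/
/-- Lemma 5.3 (Lemma 6.3 of [FLSV]): if `w` is a 1-periodic `C²` function with
`w'' + α w' ≥ β` everywhere, then `|w'| ≤ 2|β| e^{2|α|}`. -/
theorem stmt0 (w : ℝ → ℝ) (hw : ContDiff ℝ 2 w)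
    (hper : ∀ t : ℝ, w (t + 1) = w t) (α β : ℝ)
    (h : ∀ t : ℝ, deriv (deriv w) t + α * deriv w t ≥ β) :
    ∀ t : ℝ, |deriv w t| ≤ 2 * |β| * Real.exp (2 * |α|) := by
  set v := deriv w with hv
  have hwd : Differentiable ℝ w := hw.differentiable (by norm_num)
  have hv1 : ContDiff ℝ 1 v := (contDiff_succ_iff_deriv.mp (show ContDiff ℝ (1+1) w from hw)).2.2
  have hvd : Differentiable ℝ v := hv1.differentiable (by norm_num)
  have hwP : Function.Periodic w 1 := hper
  have hvP : Function.Periodic v 1 := by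
    intro t
    have hfe : (fun x => w (x + 1)) = w := funext hper
    calc v (t + 1) = deriv (fun x => w (x + 1)) t := (deriv_comp_add_const w 1 t).symm
      _ = v t := by rw [hfe]
  -- w attains a global max at some c ∈ [0,1]
  obtain ⟨c, hcmem, hcmax⟩ := (isCompact_Icc : IsCompact (Set.Icc (0:ℝ) 1)).exists_isMaxOn
    ⟨0, by norm_num⟩ hwd.continuous.continuousOn
  have hglobal : ∀ x, w x ≤ w c := by
    intro x
    have h1 : w x = w (Int.fract x) := by
      have := hwP.sub_int_mul_eq (n := ⌊x⌋) (x := x)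
      rw [Int.fract]
      simpa using this.symm
    rw [h1]
    exact hcmax ⟨Int.fract_nonneg x, (Int.fract_lt_one x).le⟩
  have hlocal : IsLocalMax w c := Filter.Eventually.of_forall (fun x => hglobal x)
  have hvc : v c = 0 := hlocal.deriv_eq_zero
  -- zeros of v at c + n for any integer n
  have hvzero : ∀ n : ℤ, v (c + n) = 0 := by
    intro n
    have := (hvP.int_mul n) c
    simpa using this.trans hvc
  intro t
  set C := |β| * Real.exp |α| with hC
  have hC0 : 0 ≤ C := mul_nonneg (abs_nonneg _) (Real.exp_pos _).le
  -- the auxiliary function and its monotonicity on [t-1, t+1]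
  set g : ℝ → ℝ := fun s => Real.exp (α * (s - t)) * v s + C * s with hg
  have hgderiv : ∀ s : ℝ, HasDerivAt g
      (Real.exp (α * (s - t)) * (deriv v s + α * v s) + C) s := by
    intro s
    have h1 : HasDerivAt (fun s : ℝ => α * (s - t)) α s := by
      simpa using ((hasDerivAt_id s).sub_const t).const_mul α
    have h2 := h1.exp
    have h3 : HasDerivAt v (deriv v s) s := (hvd s).hasDerivAt
    have h4 := h2.mul h3
    have h5 : HasDerivAt (fun s : ℝ => C * s) C s := by
      simpa using (hasDerivAt_id s).const_mul C
    exact (h4.add h5).congr_deriv (by ring)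
  have hgmono : MonotoneOn g (Set.Icc (t-1) (t+1)) := by
    apply monotoneOn_of_deriv_nonneg (convex_Icc _ _)
    · exact (Differentiable.continuous (fun s => (hgderiv s).differentiableAt)).continuousOn
    · intro s _
      exact ((hgderiv s).differentiableAt).differentiableWithinAt
    · intro s hs
      rw [interior_Icc] at hs
      rw [(hgderiv s).deriv]
      have hexp_le : Real.exp (α * (s - t)) ≤ Real.exp |α| := by
        apply Real.exp_le_exp.mpr
        calc α * (s - t) ≤ |α * (s - t)| := le_abs_self _
          _ = |α| * |s - t| := abs_mul _ _
          _ ≤ |α| * 1 := by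
              apply mul_le_mul_of_nonneg_left _ (abs_nonneg α)
              rw [abs_le]; constructor <;> [linarith [hs.1]; linarith [hs.2]]
          _ = |α| := mul_one _
      have h1 : Real.exp (α * (s - t)) * β ≤ Real.exp (α * (s - t)) * (deriv v s + α * v s) := by
        apply mul_le_mul_of_nonneg_left _ (Real.exp_pos _).le
        exact h s
      have h2 : -C ≤ Real.exp (α * (s - t)) * β := by
        have : |Real.exp (α * (s - t)) * β| ≤ C := by
          rw [abs_mul, abs_of_pos (Real.exp_pos _), hC, mul_comm]
          exact mul_le_mul_of_nonneg_left hexp_le (abs_nonneg β)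
        linarith [neg_abs_le (Real.exp (α * (s - t)) * β)]
      linarith
  -- pick zeros of v on either side of t
  have ht0r : ∃ t0, t ≤ t0 ∧ t0 ≤ t + 1 ∧ v t0 = 0 := by
    refine ⟨c + ⌈t - c⌉, ?_, ?_, hvzero _⟩
    · have := Int.le_ceil (t - c); linarith
    · have := Int.ceil_lt_add_one (t - c); linarith
  have ht0l : ∃ t0, t - 1 ≤ t0 ∧ t0 ≤ t ∧ v t0 = 0 := by
    refine ⟨c + ⌊t - c⌋, ?_, ?_, hvzero _⟩
    · have := Int.sub_one_lt_floor (t - c); linarith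
    · have := Int.floor_le (t - c); linarith
  obtain ⟨t0, ht0₁, ht0₂, ht0v⟩ := ht0r
  obtain ⟨t1, ht1₁, ht1₂, ht1v⟩ := ht0l
  have hub : v t ≤ C := by
    have := hgmono (Set.mem_Icc.mpr ⟨by linarith, by linarith⟩)
      (Set.mem_Icc.mpr ⟨by linarith, by linarith⟩) ht0₁
    simp only [hg, ht0v, mul_zero, zero_add, sub_self, mul_zero, Real.exp_zero, one_mul] at this
    nlinarith
  have hlb : -C ≤ v t := by
    have := hgmono (Set.mem_Icc.mpr ⟨by linarith, by linarith⟩)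
      (Set.mem_Icc.mpr ⟨by linarith, by linarith⟩) ht1₂
    simp only [hg, ht1v, mul_zero, zero_add, sub_self, Real.exp_zero, one_mul] at this
    nlinarith
  have habs : |v t| ≤ C := abs_le.mpr ⟨hlb, hub⟩
  calc |v t| ≤ C := habs
    _ ≤ 2 * |β| * Real.exp (2 * |α|) := by
        rw [hC]
        have h1 : Real.exp |α| ≤ Real.exp (2 * |α|) :=
          Real.exp_le_exp.mpr (by nlinarith [abs_nonneg α])
        nlinarith [abs_nonneg β, (Real.exp_pos |α|).le]
end

section
/- Let $u \in C^2(\mathbb{T}^2)$ satisfy $u_{yy}(x,y) + B_{22}\, u_y(x,y) \ge -C_{22}$ for all $(x,y)$, where $B_{22}, C_{22}$ are real constants. Then $|u_y(x,y)| \le 2\, C_{22}\, e^{2|B_{22}|}$ for all $(x,y)$, provided $C_{22} \ge 0$. -/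
open Real

/-- Partial derivative in the first variable. -/
noncomputable def pX (u : ℝ → ℝ → ℝ) : ℝ → ℝ → ℝ := fun x y => deriv (fun s => u s y) x

/-- Partial derivative in the second variable. -/
noncomputable def pY (u : ℝ → ℝ → ℝ) : ℝ → ℝ → ℝ := fun x y => deriv (fun s => u x s) y

/-- `u` is 1-periodic in both variables, i.e. defines a function on the torus `𝕋²`. -/
def Per2 (u : ℝ → ℝ → ℝ) : Prop := ∀ x y : ℝ, u (x + 1) y = u x y ∧ u x (y + 1) = u x y

/-- One dimensional estimate on the circle: if `w'' + α w' ≥ -C` and `w` is `1`-periodic,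
then `|w'| ≤ C e^{|α|}`. -/
lemma oneD (w : ℝ → ℝ) (hw : ContDiff ℝ 2 w) (hper : Function.Periodic w 1)
    (α C : ℝ) (hC : 0 ≤ C) (hineq : ∀ t : ℝ, deriv (deriv w) t + α * deriv w t ≥ -C) :
    ∀ t : ℝ, |deriv w t| ≤ C * Real.exp |α| := by
  set v : ℝ → ℝ := deriv w with hv_def
  have hw2 : ContDiff ℝ (1 + 1 : ℕ) w := by exact_mod_cast hw
  rw [show ((1 + 1 : ℕ) : WithTop ℕ∞) = (1 : WithTop ℕ∞) + 1 by norm_cast] at hw2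
  have hwv := contDiff_succ_iff_deriv.mp hw2
  have hw_diff : Differentiable ℝ w := hwv.1
  have hv1 : ContDiff ℝ 1 v := hwv.2.2
  have hv_diff : Differentiable ℝ v := hv1.differentiable one_ne_zero
  have hv_cont : Continuous v := hv1.continuous
  -- v is periodic
  have hvper : Function.Periodic v 1 := by
    intro t
    have : (fun s => w (s + 1)) = w := funext fun s => hper s
    calc v (t + 1) = deriv (fun s => w (s + 1)) t := (deriv_comp_add_const w 1 t).symm
    _ = v t := by rw [this]
  -- there is a zero of v
  obtain ⟨t₀, _, ht₀⟩ := exists_hasDerivAt_eq_slope w v (by norm_num : (0:ℝ) < 1)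
    hw_diff.continuous.continuousOn (fun t _ => (hw_diff t).hasDerivAt)
  have hv0 : v t₀ = 0 := by
    rw [ht₀, show w 1 = w 0 from by simpa using hper 0]; simp
  -- the auxiliary monotone function
  set g : ℝ → ℝ := fun t => Real.exp (α * t) * v t + C * ∫ s in t₀..t, Real.exp (α * s)
    with hg_def
  have hexpc : Continuous fun s : ℝ => Real.exp (α * s) := by continuity
  have hg : ∀ t : ℝ, HasDerivAt g
      (Real.exp (α * t) * (deriv v t + α * v t + C)) t := by
    intro t
    have h1 : HasDerivAt (fun t => Real.exp (α * t)) (α * Real.exp (α * t)) t := by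
      have := (Real.hasDerivAt_exp (α * t)).comp t ((hasDerivAt_id t).const_mul α)
      simpa [mul_comm, Function.comp_def] using this
    have h2 : HasDerivAt v (deriv v t) t := (hv_diff t).hasDerivAt
    have h3 : HasDerivAt (fun t => ∫ s in t₀..t, Real.exp (α * s)) (Real.exp (α * t)) t :=
      intervalIntegral.integral_hasDerivAt_right (hexpc.intervalIntegrable _ _)
        (hexpc.stronglyMeasurableAtFilter _ _) hexpc.continuousAt
    have : HasDerivAt g (α * Real.exp (α * t) * v t + Real.exp (α * t) * deriv v t +
        C * Real.exp (α * t)) t := (h1.mul h2).add (h3.const_mul C)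
    convert this using 1
    ring
  have hmono : Monotone g := by
    apply monotone_of_deriv_nonneg (fun t => (hg t).differentiableAt)
    intro t
    rw [(hg t).deriv]
    have := hineq t
    have h4 : 0 ≤ deriv v t + α * v t + C := by simp only [hv_def]; linarith
    positivity
  have hg0 : g t₀ = 0 := by simp [hg_def, hv0]
  -- pointwise bound on exp (α s)
  have key : ∀ a b t : ℝ, a ≤ b → b - a ≤ 1 → t ∈ Set.Icc a b →
      (∫ s in a..b, Real.exp (α * s)) ≤ (b - a) * (Real.exp (α * t) * Real.exp |α|) := by
    intro a b t hab hlen ht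
    have hmon := intervalIntegral.integral_mono_on (f := fun s => Real.exp (α * s))
      (g := fun _ : ℝ => Real.exp (α * t) * Real.exp |α|) (μ := MeasureTheory.volume) hab
      (hexpc.intervalIntegrable _ _)
      (intervalIntegrable_const)
      (by
        intro s hs
        rw [← Real.exp_add]
        apply Real.exp_le_exp.mpr
        have h5 : |α * s - α * t| ≤ |α| := by
          rw [← mul_sub, abs_mul]
          have : |s - t| ≤ 1 := by
            rw [abs_le]
            constructor <;> [linarith [hs.1, ht.2]; linarith [hs.2, ht.1]]
          calc |α| * |s - t| ≤ |α| * 1 := by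
                exact mul_le_mul_of_nonneg_left this (abs_nonneg _)
          _ = |α| := mul_one _
        have := (abs_le.mp h5).2
        linarith)
    rwa [intervalIntegral.integral_const, smul_eq_mul] at hmon
  -- lower bound on [t₀, t₀+1]
  have hlow : ∀ t : ℝ, t₀ ≤ t → t ≤ t₀ + 1 → -(C * Real.exp |α|) ≤ v t := by
    intro t h1 h2
    have hm := hmono h1
    rw [hg0] at hm
    have hI := key t₀ t t h1 (by linarith) ⟨h1, le_refl t⟩
    have hexp_pos : 0 < Real.exp (α * t) := Real.exp_pos _
    have : -(C * (Real.exp (α * t) * Real.exp |α|)) ≤ Real.exp (α * t) * v t := by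
      have hCI : C * (∫ s in t₀..t, Real.exp (α * s)) ≤
          C * ((t - t₀) * (Real.exp (α * t) * Real.exp |α|)) :=
        mul_le_mul_of_nonneg_left hI hC
      have h6 : (t - t₀) * (Real.exp (α * t) * Real.exp |α|) ≤
          1 * (Real.exp (α * t) * Real.exp |α|) := by
        apply mul_le_mul_of_nonneg_right (by linarith) (by positivity)
      simp only [hg_def] at hm
      nlinarith
    nlinarith
  -- upper bound on [t₀ - 1, t₀]
  have hhigh : ∀ t : ℝ, t₀ - 1 ≤ t → t ≤ t₀ → v t ≤ C * Real.exp |α| := by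
    intro t h1 h2
    have hm := hmono h2
    rw [hg0] at hm
    have hswap : (∫ s in t₀..t, Real.exp (α * s)) = -∫ s in t..t₀, Real.exp (α * s) := by
      rw [intervalIntegral.integral_symm]
    have hI := key t t₀ t h2 (by linarith) ⟨le_refl t, h2⟩
    have hexp_pos : 0 < Real.exp (α * t) := Real.exp_pos _
    simp only [hg_def] at hm
    rw [hswap] at hm
    have h6 : (t₀ - t) * (Real.exp (α * t) * Real.exp |α|) ≤
        1 * (Real.exp (α * t) * Real.exp |α|) := by
      apply mul_le_mul_of_nonneg_right (by linarith) (by positivity)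
    nlinarith
  -- conclude via periodicity
  intro y
  set n : ℤ := ⌊y - t₀⌋ with hn
  have hfr : y - t₀ - n ∈ Set.Ico (0:ℝ) 1 := ⟨by
      have := Int.floor_le (y - t₀); linarith,
    by have := Int.lt_floor_add_one (y - t₀); linarith⟩
  have hy1 : v (y - n) = v y := by
    have := hvper.sub_int_mul_eq (x := y) n
    simpa using this
  have hy2 : v (y - n - 1) = v y := by rw [hvper.sub_eq, hy1]
  rw [abs_le]
  constructor
  · rw [← hy1]
    exact hlow (y - n) (by linarith [hfr.1]) (by linarith [hfr.2.le])
  · rw [← hy2]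
    exact hhigh (y - n - 1) (by linarith [hfr.1]) (by linarith [hfr.2.le])

/-- The gradient estimate in the `y`-variable: if `u_{yy} + B₂₂ u_y ≥ -C₂₂` with
`C₂₂ ≥ 0`, then `|u_y| ≤ 2 C₂₂ e^{2|B₂₂|}`. -/
theorem stmt3 (u : ℝ → ℝ → ℝ)
    (hu : ContDiff ℝ 2 (fun p : ℝ × ℝ => u p.1 p.2)) (huper : Per2 u)
    (B₂₂ C₂₂ : ℝ) (hC : C₂₂ ≥ 0)
    (h : ∀ x y : ℝ, pY (pY u) x y + B₂₂ * pY u x y ≥ -C₂₂) :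
    ∀ x y : ℝ, |pY u x y| ≤ 2 * C₂₂ * Real.exp (2 * |B₂₂|) := by
  intro x y
  have hw : ContDiff ℝ 2 (u x) := by
    have : ContDiff ℝ 2 (fun s : ℝ => (x, s)) := contDiff_const.prodMk contDiff_id
    exact hu.comp this
  have hper : Function.Periodic (u x) 1 := fun t => (huper x t).2
  have hderiv : pY u x = deriv (u x) := rfl
  have hineq : ∀ t : ℝ, deriv (deriv (u x)) t + B₂₂ * deriv (u x) t ≥ -C₂₂ := by
    intro t
    have := h x t
    simpa [pY] using this
  have hbound := oneD (u x) hw hper B₂₂ C₂₂ hC hineq y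
  have h1 : Real.exp |B₂₂| ≤ Real.exp (2 * |B₂₂|) :=
    Real.exp_le_exp.mpr (by nlinarith [abs_nonneg B₂₂])
  have h2 : (0:ℝ) < Real.exp (2 * |B₂₂|) := Real.exp_pos _
  calc |pY u x y| = |deriv (u x) y| := by rw [hderiv]
  _ ≤ C₂₂ * Real.exp |B₂₂| := hbound
  _ ≤ 2 * C₂₂ * Real.exp (2 * |B₂₂|) := by nlinarith
end

section
/- Let $u \in C^2(\mathbb{T}^2)$ satisfy $A_{11}[u]A_{22}[u] - (A_{12}[u])^2 \ge E_1 > 0$ everywhere, where $A_{11}[u] = u_{xx} + B_{11}u_y + C_{11} + Du$, $A_{12}[u] = u_{xy} + B_{12}u_y + C_{12}$, $A_{22}[u] = u_{yy} + B_{22}u_y + C_{22}$ with real constants and $D \le 0$, $C_{22} > 0$. Then $u_{yy} + B_{22} u_y + C_{22} > 0$ everywhere and hence $\sup |u_y| \le 2 C_{22} e^{2|B_{22}|}$. -/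
open Real

open MeasureTheory intervalIntegral in
lemma key1d (v : ℝ → ℝ) (hv : ContDiff ℝ 2 v) (hper : ∀ y, v (y + 1) = v y)
    (B C : ℝ) (hC : 0 < C)
    (hne : ∀ y, deriv (deriv v) y + B * deriv v y + C ≠ 0) :
    (∀ y, 0 < deriv (deriv v) y + B * deriv v y + C) ∧
    (∀ y, |deriv v y| ≤ C * Real.exp |B|) := by
  set w := deriv v with hw_def
  set A : ℝ → ℝ := fun y => deriv w y + B * w y + C with hA_def
  have hv1 : Differentiable ℝ v := hv.differentiable (by norm_num)
  have hw2 : ContDiff ℝ 1 w := by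
    have h := contDiff_succ_iff_deriv.mp (show ContDiff ℝ (1 + 1) v from by exact_mod_cast hv)
    exact h.2.2
  have hw1 : Differentiable ℝ w := hw2.differentiable one_ne_zero
  have hwc : Continuous w := hw1.continuous
  have hdwc : Continuous (deriv w) := hw2.continuous_deriv le_rfl
  have hAc : Continuous A := by
    exact (hdwc.add (continuous_const.mul hwc)).add continuous_const
  have hwper : ∀ y, w (y + 1) = w y := by
    intro y
    have hvshift : (fun t => v (t + 1)) = v := funext fun t => hper t
    calc w (y + 1) = deriv (fun t => v (t + 1)) y := (deriv_comp_add_const v 1 y).symm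
    _ = w y := by rw [hvshift]
  set G : ℝ → ℝ := fun y => ∫ t in (0:ℝ)..y, Real.exp (B * t) with hG_def
  have hexpc : Continuous fun t : ℝ => Real.exp (B * t) := by continuity
  have hGd : ∀ y, HasDerivAt G (Real.exp (B * y)) y := fun y =>
    integral_hasDerivAt_right (hexpc.intervalIntegrable _ _)
      (hexpc.stronglyMeasurableAtFilter _ _) hexpc.continuousAt
  set h : ℝ → ℝ := fun y => Real.exp (B * y) * w y + C * G y with hh_def
  have hhd : ∀ y, HasDerivAt h (Real.exp (B * y) * A y) y := by
    intro y
    have h1 : HasDerivAt (fun y => Real.exp (B * y)) (Real.exp (B * y) * B) y := by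
      simpa using ((hasDerivAt_id y).const_mul B).exp
    have h2 : HasDerivAt w (deriv w y) y := (hw1 y).hasDerivAt
    have h3 := (h1.mul h2).add ((hGd y).const_mul C)
    refine HasDerivAt.congr_deriv h3 ?_
    show _ = Real.exp (B * y) * (deriv w y + B * w y + C)
    ring
  have hderiv : ∀ y, deriv h y = Real.exp (B * y) * A y := fun y => (hhd y).deriv
  have hzero : ∀ a : ℝ, ∃ c ∈ Set.Ioo a (a + 1), w c = 0 := by
    intro a
    obtain ⟨c, hc, hc0⟩ := exists_deriv_eq_zero (f := v) (by linarith : a < a + 1)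
      hv1.continuous.continuousOn (hper a).symm
    exact ⟨c, hc, hc0⟩
  have hApos : ∀ y, 0 < A y := by
    by_contra hcon
    push_neg at hcon
    obtain ⟨b, hb⟩ := hcon
    have hbneg : A b < 0 := lt_of_le_of_ne hb (hne b)
    have hAneg : ∀ y, A y < 0 := by
      intro y
      by_contra hy
      push_neg at hy
      have hy' : 0 < A y := lt_of_le_of_ne hy (Ne.symm (hne y))
      have h0mem : (0:ℝ) ∈ Set.uIcc (A b) (A y) := by
        rw [Set.mem_uIcc]; left; exact ⟨le_of_lt hbneg, le_of_lt hy'⟩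
      obtain ⟨c, _, hc⟩ := intermediate_value_uIcc hAc.continuousOn h0mem
      exact hne c hc
    have hanti : StrictAnti h := strictAnti_of_deriv_neg fun y => by
      rw [hderiv y]
      exact mul_neg_of_pos_of_neg (exp_pos _) (hAneg y)
    obtain ⟨c, _, hc0⟩ := hzero 0
    have hc1 : w (c + 1) = 0 := by rw [hwper c, hc0]
    have hlt : h (c + 1) < h c := hanti (by linarith)
    have hGlt : G (c + 1) < G c := by
      simp only [hh_def, hc0, hc1, mul_zero, zero_add] at hlt
      exact lt_of_mul_lt_mul_left hlt (le_of_lt hC)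
    have hint : 0 < ∫ t in c..(c + 1), Real.exp (B * t) :=
      intervalIntegral_pos_of_pos (hexpc.intervalIntegrable _ _) (fun t => exp_pos _)
        (by linarith)
    have hsplit : (∫ t in (0:ℝ)..c, Real.exp (B * t)) + ∫ t in c..(c + 1), Real.exp (B * t)
        = ∫ t in (0:ℝ)..(c + 1), Real.exp (B * t) :=
      integral_add_adjacent_intervals (hexpc.intervalIntegrable _ _)
        (hexpc.intervalIntegrable _ _)
    simp only [hG_def] at hGlt
    linarith
  refine ⟨hApos, ?_⟩
  have hmono : StrictMono h := strictMono_of_deriv_pos fun y => by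
    rw [hderiv y]
    exact mul_pos (exp_pos _) (hApos y)
  intro y
  have hE : (0:ℝ) < Real.exp (B * y) := exp_pos _
  have hbound : ∀ a b : ℝ, a ≤ b → b - a ≤ 1 → |y - a| ≤ 1 → |y - b| ≤ 1 →
      (∫ t in a..b, Real.exp (B * t)) ≤ Real.exp (B * y) * Real.exp |B| := by
    intro a b hab hba h1 h2
    rw [abs_le] at h1 h2
    have hmon : (∫ t in a..b, Real.exp (B * t)) ≤ ∫ _t in a..b, Real.exp (B * y + |B|) := by
      apply integral_mono_on hab (hexpc.intervalIntegrable _ _) intervalIntegrable_const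
      intro t ht
      apply exp_le_exp.mpr
      have h3 : |t - y| ≤ 1 := by
        rw [abs_le]
        exact ⟨by linarith [ht.1, h1.2], by linarith [ht.2, h2.1]⟩
      have h4 : B * t - B * y ≤ |B| := by
        calc B * t - B * y = B * (t - y) := by ring
        _ ≤ |B * (t - y)| := le_abs_self _
        _ = |B| * |t - y| := abs_mul _ _
        _ ≤ |B| * 1 := by nlinarith [abs_nonneg B]
        _ = |B| := mul_one _
      linarith
    rw [intervalIntegral.integral_const] at hmon
    calc (∫ t in a..b, Real.exp (B * t)) ≤ (b - a) • Real.exp (B * y + |B|) := hmon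
    _ = (b - a) * (Real.exp (B * y) * Real.exp |B|) := by rw [smul_eq_mul, exp_add]
    _ ≤ 1 * (Real.exp (B * y) * Real.exp |B|) := by
        apply mul_le_mul_of_nonneg_right _ (by positivity)
        linarith
    _ = Real.exp (B * y) * Real.exp |B| := one_mul _
  have hGdiff : ∀ a b : ℝ, G b - G a = ∫ t in a..b, Real.exp (B * t) := by
    intro a b
    have hs := integral_add_adjacent_intervals (μ := volume) (a := (0:ℝ)) (b := a) (c := b)
      (hexpc.intervalIntegrable _ _) (hexpc.intervalIntegrable _ _)
    simp only [hG_def]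
    linarith
  rw [abs_le]
  constructor
  · obtain ⟨c, hc, hc0⟩ := hzero (y - 1)
    have hcy : c < y := by have := hc.2; linarith
    have hcy1 : y - 1 < c := hc.1
    have hlt : h c < h y := hmono hcy
    simp only [hh_def, hc0, mul_zero, zero_add] at hlt
    have hint : G y - G c ≤ Real.exp (B * y) * Real.exp |B| := by
      rw [hGdiff c y]
      apply hbound c y (le_of_lt hcy) (by linarith)
        (by rw [abs_le]; exact ⟨by linarith, by linarith⟩) (by simp)
    have hmul : Real.exp (B * y) * (-(C * Real.exp |B|)) < Real.exp (B * y) * w y := by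
      nlinarith
    have := (mul_lt_mul_iff_right₀ hE).mp hmul
    linarith
  · obtain ⟨c, hc, hc0⟩ := hzero y
    have hlt : h y < h c := hmono hc.1
    simp only [hh_def, hc0, mul_zero, zero_add] at hlt
    have hint : G c - G y ≤ Real.exp (B * y) * Real.exp |B| := by
      rw [hGdiff y c]
      apply hbound y c (le_of_lt hc.1) (by linarith [hc.2]) (by simp)
        (by rw [abs_le]; exact ⟨by linarith [hc.2], by linarith [hc.1]⟩)
    have hmul : Real.exp (B * y) * w y < Real.exp (B * y) * (C * Real.exp |B|) := by
      nlinarith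
    have := (mul_lt_mul_iff_right₀ hE).mp hmul
    linarith


/-- Positivity of `A₂₂[u]` and the resulting gradient bound `|u_y| ≤ 2 C₂₂ e^{2|B₂₂|}`
for subsolutions of the generalized Monge–Ampère inequality. -/
theorem stmt15 (u : ℝ → ℝ → ℝ)
    (hu : ContDiff ℝ 2 (fun p : ℝ × ℝ => u p.1 p.2)) (huper : Per2 u)
    (B₁₁ B₁₂ B₂₂ C₁₁ C₁₂ C₂₂ D E₁ : ℝ) (hD : D ≤ 0) (hC₂₂ : C₂₂ > 0) (hE₁ : E₁ > 0)
    (heq : ∀ x y : ℝ,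
      (pX (pX u) x y + B₁₁ * pY u x y + C₁₁ + D * u x y) *
        (pY (pY u) x y + B₂₂ * pY u x y + C₂₂) -
      (pX (pY u) x y + B₁₂ * pY u x y + C₁₂) ^ 2 ≥ E₁) :
    (∀ x y : ℝ, pY (pY u) x y + B₂₂ * pY u x y + C₂₂ > 0) ∧
    ∀ x y : ℝ, |pY u x y| ≤ 2 * C₂₂ * Real.exp (2 * |B₂₂|) := by
  have key : ∀ x : ℝ,
      (∀ y, 0 < deriv (deriv (fun s => u x s)) y + B₂₂ * deriv (fun s => u x s) y + C₂₂) ∧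
      (∀ y, |deriv (fun s => u x s) y| ≤ C₂₂ * Real.exp |B₂₂|) := by
    intro x
    apply key1d
    · exact hu.comp (contDiff_const.prodMk contDiff_id)
    · exact fun y => (huper x y).2
    · exact hC₂₂
    · intro y h0
      have h := heq x y
      have e1 : pY (pY u) x y = deriv (deriv (fun s => u x s)) y := rfl
      have e2 : pY u x y = deriv (fun s => u x s) y := rfl
      rw [e1, e2, h0] at h
      nlinarith [sq_nonneg (pX (pY u) x y + B₁₂ * deriv (fun s => u x s) y + C₁₂)]
  constructor
  · intro x y; exact (key x).1 y
  · intro x y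
    have hb := (key x).2 y
    have h2 : C₂₂ * Real.exp |B₂₂| ≤ 2 * C₂₂ * Real.exp (2 * |B₂₂|) := by
      have h1 : Real.exp |B₂₂| ≤ Real.exp (2 * |B₂₂|) :=
        Real.exp_le_exp.mpr (by nlinarith [abs_nonneg B₂₂])
      nlinarith [Real.exp_pos |B₂₂|]
    calc |pY u x y| = |deriv (fun s => u x s) y| := rfl
    _ ≤ C₂₂ * Real.exp |B₂₂| := hb
    _ ≤ _ := h2
end
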